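/- Let an instance have n ≥ 2 bidders and m items with nonnegative valuations V_{ij}, and let P be a K-anonymous scheme with welfare W. For each bundle of P choose a winner attaining the maximum value, and for each bidder i let V_i be the total value of the bundles won by i; let V* = max_i V_i. Then there exists a K-anonymous scheme whose revenue is at least (W − V*)/2. In particular, if V* ≤ β·W for some 0 < β < 1, there is a K-anonymous scheme with revenue at least ((1−β)/2)·W. -/

import Mathlib

open Finset

/-- The welfare of a bundling scheme `P`: the sum over bundles of the
maximum, over bidders, of the bidder's total value for the bundle. -/
noncomputable def welfare {n m : ℕ} (V : Fin n → Fin m → ℝ)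
    (P : Finpartition (univ : Finset (Fin m))) : ℝ :=
  ∑ b ∈ P.parts, ⨆ i, ∑ j ∈ b, V i j

/-- The second-highest of the values `w 0, …, w (n-1)` (for `n ≥ 2`):
the minimum over `i` of the maximum of the values with index `≠ i`. -/
noncomputable def secondPrice {n : ℕ} (w : Fin n → ℝ) : ℝ :=
  ⨅ i, ⨆ k : {k : Fin n // k ≠ i}, w (k : Fin n)

/-- The revenue of a bundling scheme `P`: the sum over bundles of the
second-highest value, among the bidders, for the bundle. -/
noncomputable def revenue {n m : ℕ} (V : Fin n → Fin m → ℝ)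
    (P : Finpartition (univ : Finset (Fin m))) : ℝ :=
  ∑ b ∈ P.parts, secondPrice fun i => ∑ j ∈ b, V i j

/-- A scheme is `K`-anonymous if every bundle contains at least `K` items. -/
def KAnonymous {m : ℕ} (K : ℕ) (P : Finpartition (univ : Finset (Fin m))) : Prop :=
  ∀ b ∈ P.parts, K ≤ b.card

/-- Let `P` be a `K`-anonymous scheme with welfare `W`,
for each bundle choose a winner `win b` attaining the maximum value, let
`Vtot i` be the total value of the bundles won by bidder `i`, and let
`Vstar = max_i Vtot i`.  Then some `K`-anonymous scheme has revenue at least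
`(W - Vstar) / 2`; in particular, if `Vstar ≤ β·W` with `0 < β < 1`, some
`K`-anonymous scheme has revenue at least `((1 - β)/2)·W`. -/
lemma le_secondPrice {n : ℕ} (hn : 2 ≤ n) (w : Fin n → ℝ) (a b : Fin n) (hab : a ≠ b)
    {x : ℝ} (ha : x ≤ w a) (hb : x ≤ w b) : x ≤ secondPrice w := by
  haveI : NeZero n := ⟨by omega⟩
  haveI : Nontrivial (Fin n) := Fin.nontrivial_iff_two_le.2 hn
  refine le_ciInf fun i => ?_
  have hbdd : ∀ i : Fin n, BddAbove (Set.range fun k : {k : Fin n // k ≠ i} => w k) :=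
    fun i => (Set.finite_range _).bddAbove
  rcases ne_or_eq a i with h | h
  · calc x ≤ w a := ha
      _ ≤ _ := le_ciSup (hbdd i) (⟨a, h⟩ : {k : Fin n // k ≠ i})
  · have hbi : b ≠ i := by rintro rfl; exact hab h
    calc x ≤ w b := hb
      _ ≤ _ := le_ciSup (hbdd i) (⟨b, hbi⟩ : {k : Fin n // k ≠ i})

lemma secondPrice_nonneg {n : ℕ} (hn : 2 ≤ n) (w : Fin n → ℝ) (hw : ∀ k, 0 ≤ w k) :
    0 ≤ secondPrice w := by
  haveI : Nontrivial (Fin n) := Fin.nontrivial_iff_two_le.2 hn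
  obtain ⟨a, b, hab⟩ := exists_pair_ne (Fin n)
  exact le_secondPrice hn w a b hab (hw a) (hw b)

lemma pair_sum {c : ℕ → ℝ} (hmono : ∀ k, c (k + 1) ≤ c k) (M : ℕ) :
    ∑ k ∈ Finset.Ico 1 (2 * M + 1), c k ≤ 2 * ∑ t ∈ Finset.range M, c (2 * t + 1) := by
  induction M with
  | zero => simp
  | succ M ih =>
    have h1 : 2 * (M + 1) + 1 = (2 * M + 1) + 1 + 1 := by ring
    rw [h1, Finset.sum_Ico_succ_top (by omega), Finset.sum_Ico_succ_top (by omega),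
      Finset.sum_range_succ]
    have := hmono (2 * M + 1)
    linarith

theorem stmt11 (n m K : ℕ) (hn : 2 ≤ n)
    (V : Fin n → Fin m → ℝ) (hV : ∀ i j, 0 ≤ V i j)
    (P : Finpartition (univ : Finset (Fin m))) (hP : KAnonymous K P)
    (win : Finset (Fin m) → Fin n)
    (hwin : ∀ b ∈ P.parts, ∑ j ∈ b, V (win b) j = ⨆ i, ∑ j ∈ b, V i j)
    (Vtot : Fin n → ℝ)
    (hVtot : ∀ i, Vtot i = ∑ b ∈ P.parts.filter (fun b => win b = i), ∑ j ∈ b, V i j)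
    (Vstar : ℝ) (hVstar : Vstar = ⨆ i, Vtot i) :
    (∃ Q : Finpartition (univ : Finset (Fin m)),
      KAnonymous K Q ∧ (welfare V P - Vstar) / 2 ≤ revenue V Q) ∧
    (∀ β : ℝ, 0 < β → β < 1 → Vstar ≤ β * welfare V P →
      ∃ Q : Finpartition (univ : Finset (Fin m)),
        KAnonymous K Q ∧ (1 - β) / 2 * welfare V P ≤ revenue V Q) := by
  haveI : NeZero n := ⟨by omega⟩
  have hVtot0 : ∀ i, 0 ≤ Vtot i := fun i => by
    rw [hVtot]; exact Finset.sum_nonneg fun b _ => Finset.sum_nonneg fun j _ => hV i j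
  have hVstar_le : ∀ i, Vtot i ≤ Vstar := fun i => by
    rw [hVstar]; exact le_ciSup (Set.finite_range _).bddAbove i
  -- welfare equals total winner value
  have hW : welfare V P = ∑ i, Vtot i := by
    have h1 : ∀ i, Vtot i = ∑ b ∈ P.parts.filter (fun b => win b = i),
        ∑ j ∈ b, V (win b) j := fun i => by
      rw [hVtot]
      refine Finset.sum_congr rfl fun b hb => ?_
      rw [(Finset.mem_filter.1 hb).2]
    rw [Finset.sum_congr rfl fun i _ => h1 i, Finset.sum_fiberwise]
    exact (Finset.sum_congr rfl fun b hb => (hwin b hb)).symm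
  -- sort bidders by Vtot, nonincreasing
  set σ : Equiv.Perm (Fin n) := Tuple.sort (fun i => -Vtot i) with hσ
  have hmono : ∀ k l : Fin n, k ≤ l → Vtot (σ l) ≤ Vtot (σ k) := by
    intro k l hkl
    have := Tuple.monotone_sort (fun i => -Vtot i) hkl
    simp only [Function.comp_apply, neg_le_neg_iff] at this
    exact this
  set c : ℕ → ℝ := fun k => if h : k < n then Vtot (σ ⟨k, h⟩) else 0 with hc
  have hc0 : ∀ k, 0 ≤ c k := fun k => by
    rw [hc]; dsimp only; split
    · exact hVtot0 _
    · exact le_refl 0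
  have hcmono : ∀ k, c (k + 1) ≤ c k := fun k => by
    rw [hc]; dsimp only
    by_cases h1 : k + 1 < n
    · rw [dif_pos h1, dif_pos (by omega : k < n)]
      exact hmono _ _ (Fin.mk_le_mk.2 (by omega))
    · rw [dif_neg h1]
      split
      · exact hVtot0 _
      · exact le_refl 0
  -- group items by rank of winner of their part, halved
  set grp : Fin m → ℕ := fun j => ((σ.symm (win (P.part j))) : ℕ) / 2 with hgrp
  haveI : DecidableRel (Setoid.ker grp).r := fun a b => inferInstanceAs (Decidable (grp a = grp b))
  set Q := Finpartition.ofSetoid (Setoid.ker grp) with hQ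
  have hgrp_const : ∀ b ∈ P.parts, ∀ j ∈ b, grp j = ((σ.symm (win b)) : ℕ) / 2 := by
    intro b hb j hj
    rw [hgrp]; dsimp only
    rw [P.part_eq_of_mem hb hj]
  have hQpart : ∀ j j' : Fin m, j' ∈ Q.part j ↔ grp j = grp j' := fun j j' =>
    Finpartition.mem_part_ofSetoid_iff_rel
  -- K-anonymity
  have hQK : KAnonymous K Q := by
    intro q hq
    obtain ⟨j, hj⟩ := Q.nonempty_of_mem_parts hq
    have hPj : P.part j ⊆ q := by
      intro j' hj'
      have h1 : grp j = grp j' := by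
        rw [hgrp_const (P.part j) (P.part_mem.2 (mem_univ j)) j (P.mem_part (mem_univ j)),
          hgrp_const (P.part j) (P.part_mem.2 (mem_univ j)) j' hj']
      have h2 := (hQpart j j').2 h1
      rwa [Q.part_eq_of_mem hq hj] at h2
    exact le_trans (hP _ (P.part_mem.2 (mem_univ j))) (Finset.card_le_card hPj)
  -- the group label of a part of Q
  set gq : Finset (Fin m) → ℕ := fun q => if h : q.Nonempty then grp (q.min' h) else 0 with hgq
  have hmemq : ∀ q ∈ Q.parts, ∀ j, j ∈ q ↔ gq q = grp j := by
    intro q hq j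
    have h : q.Nonempty := Q.nonempty_of_mem_parts hq
    have hpq : Q.part (q.min' h) = q := Q.part_eq_of_mem hq (q.min'_mem h)
    have h2 : j ∈ q ↔ grp (q.min' h) = grp j := by rw [← hQpart (q.min' h) j, hpq]
    rw [hgq]; dsimp only; rw [dif_pos h]; exact h2
  -- per-part second price bound
  have key : ∀ q ∈ Q.parts, c (2 * gq q + 1) ≤ secondPrice fun i => ∑ j ∈ q, V i j := by
    intro q hq
    by_cases hlt : 2 * gq q + 1 < n
    · have hlt0 : 2 * gq q < n := by omega
      set a := σ ⟨2 * gq q, hlt0⟩ with ha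
      set b := σ ⟨2 * gq q + 1, hlt⟩ with hb
      have hab : a ≠ b := fun h => by
        have h2 := σ.injective h
        rw [Fin.mk.injEq] at h2
        omega
      have hsub : ∀ i : Fin n, ((σ.symm i : Fin n) : ℕ) / 2 = gq q →
          Vtot i ≤ ∑ j ∈ q, V i j := by
        intro i hi
        rw [hVtot]
        have hdisj : Set.PairwiseDisjoint
            ((P.parts.filter (fun b' => win b' = i)) : Set (Finset (Fin m))) id :=
          P.disjoint.subset (Finset.coe_subset.2 (Finset.filter_subset _ _))
        have hparts : ∀ b' ∈ P.parts.filter (fun b' => win b' = i), b' ⊆ q := by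
          intro b' hb'
          obtain ⟨hb'P, hwi⟩ := Finset.mem_filter.1 hb'
          intro j hj
          rw [hmemq q hq j, hgrp_const b' hb'P j hj, hwi, hi]
        calc ∑ b' ∈ P.parts.filter (fun b' => win b' = i), ∑ j ∈ b', V i j
            = ∑ j ∈ (P.parts.filter (fun b' => win b' = i)).biUnion id, V i j :=
              (Finset.sum_biUnion hdisj).symm
          _ ≤ ∑ j ∈ q, V i j :=
              Finset.sum_le_sum_of_subset_of_nonneg (Finset.biUnion_subset.2 hparts)
                (fun j _ _ => hV i j)
      have ha2 : ((σ.symm a : Fin n) : ℕ) / 2 = gq q := by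
        rw [ha, Equiv.symm_apply_apply]
        show 2 * gq q / 2 = gq q
        omega
      have hb2 : ((σ.symm b : Fin n) : ℕ) / 2 = gq q := by
        rw [hb, Equiv.symm_apply_apply]
        show (2 * gq q + 1) / 2 = gq q
        omega
      have hba : Vtot b ≤ Vtot a := hmono _ _ (Fin.mk_le_mk.2 (by omega))
      have hceq : c (2 * gq q + 1) = Vtot b := by
        rw [hc]; dsimp only; rw [dif_pos hlt]
      rw [hceq]
      exact le_secondPrice hn _ a b hab (le_trans (le_trans hba (hsub a ha2)) (le_refl _))
        (hsub b hb2)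
    · have hceq : c (2 * gq q + 1) = 0 := by
        rw [hc]; dsimp only; rw [dif_neg hlt]
      rw [hceq]
      exact secondPrice_nonneg hn _ (fun k => Finset.sum_nonneg fun j _ => hV k j)
  -- injectivity of gq on Q.parts
  have hinj : ∀ q ∈ Q.parts, ∀ q' ∈ Q.parts, gq q = gq q' → q = q' := by
    intro q hq q' hq' hgg
    have h : q.Nonempty := Q.nonempty_of_mem_parts hq
    have hj : q.min' h ∈ q := q.min'_mem h
    have h1 : gq q = grp (q.min' h) := (hmemq q hq _).1 hj
    have h2 : q.min' h ∈ q' := (hmemq q' hq' _).2 (by rw [← hgg, h1])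
    exact Q.eq_of_mem_parts hq hq' hj h2
  -- summation chain
  have h3 : ∑ t ∈ Q.parts.image gq, c (2 * t + 1) = ∑ t ∈ Finset.range n, c (2 * t + 1) := by
    apply Finset.sum_subset
    · intro t ht
      obtain ⟨q, hq, rfl⟩ := Finset.mem_image.1 ht
      obtain ⟨j, hj⟩ := Q.nonempty_of_mem_parts hq
      rw [(hmemq q hq j).1 hj, Finset.mem_range, hgrp]
      have h4 := (σ.symm (win (P.part j))).isLt
      dsimp only
      omega
    · intro t ht hnot
      by_contra hne
      have hlt : 2 * t + 1 < n := by
        by_contra h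
        exact hne (by rw [hc]; dsimp only; rw [dif_neg h])
      have hVne : Vtot (σ ⟨2 * t + 1, hlt⟩) ≠ 0 := fun h =>
        hne (by rw [hc]; dsimp only; rw [dif_pos hlt]; exact h)
      have hfne : (P.parts.filter (fun b => win b = σ ⟨2 * t + 1, hlt⟩)).Nonempty := by
        by_contra hfe
        rw [Finset.not_nonempty_iff_eq_empty] at hfe
        exact hVne (by rw [hVtot, hfe, Finset.sum_empty])
      obtain ⟨b, hb⟩ := hfne
      obtain ⟨hbP, hwb⟩ := Finset.mem_filter.1 hb
      obtain ⟨j, hj⟩ := P.nonempty_of_mem_parts hbP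
      have hgj : grp j = t := by
        rw [hgrp_const b hbP j hj, hwb, Equiv.symm_apply_apply]
        show (2 * t + 1) / 2 = t
        omega
      exact hnot (Finset.mem_image.2 ⟨Q.part j, Q.part_mem.2 (mem_univ j), by
        rw [(hmemq _ (Q.part_mem.2 (mem_univ j)) j).1 (Q.mem_part (mem_univ j)), hgj]⟩)
  have hrev : ∑ t ∈ Finset.range n, c (2 * t + 1) ≤ revenue V Q := by
    calc ∑ t ∈ Finset.range n, c (2 * t + 1)
        = ∑ t ∈ Q.parts.image gq, c (2 * t + 1) := h3.symm
      _ = ∑ q ∈ Q.parts, c (2 * gq q + 1) := Finset.sum_image hinj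
      _ ≤ ∑ q ∈ Q.parts, secondPrice fun i => ∑ j ∈ q, V i j := Finset.sum_le_sum key
      _ = revenue V Q := rfl
  have hsum : ∑ k ∈ Finset.range n, c k = ∑ i, Vtot i := by
    rw [← Fin.sum_univ_eq_sum_range c n, ← Equiv.sum_comp σ Vtot]
    refine Finset.sum_congr rfl fun k _ => ?_
    rw [hc]; dsimp only; rw [dif_pos k.isLt]
  have hsplit : ∑ k ∈ Finset.range n, c k = c 0 + ∑ k ∈ Finset.Ico 1 n, c k := by
    rw [Finset.range_eq_Ico]
    exact Finset.sum_eq_sum_Ico_succ_bot (by omega) c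
  have hpair : ∑ k ∈ Finset.Ico 1 n, c k ≤ 2 * ∑ t ∈ Finset.range n, c (2 * t + 1) := by
    calc ∑ k ∈ Finset.Ico 1 n, c k ≤ ∑ k ∈ Finset.Ico 1 (2 * n + 1), c k :=
        Finset.sum_le_sum_of_subset_of_nonneg (Finset.Ico_subset_Ico le_rfl (by omega))
          (fun k _ _ => hc0 k)
      _ ≤ _ := pair_sum hcmono n
  have hc0star : c 0 ≤ Vstar := by
    rw [hc]; dsimp only; rw [dif_pos (by omega : 0 < n)]
    exact hVstar_le _
  have hbound : (welfare V P - Vstar) / 2 ≤ revenue V Q := by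
    have h5 : welfare V P = ∑ k ∈ Finset.range n, c k := by rw [hW, hsum]
    linarith
  refine ⟨⟨Q, hQK, hbound⟩, fun β hβ0 hβ1 hβ => ⟨Q, hQK, ?_⟩⟩
  nlinarith [hbound, hβ]
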